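/- In the toric reflection group W(k,n,m), the element c = (x₁x₂⋯xₙ)^m is central. -/

import Mathlib

/-- The word `x_i x_{i+1} ⋯ x_{i+l-1}` (with `l` factors, indices mod `n`) in the free
group on `ZMod n`. -/
def wWord (n l : ℕ) (i : ZMod n) : FreeGroup (ZMod n) :=
  ((List.range l).map fun j => FreeGroup.of (i + (j : ZMod n))).prod

/-- The relations of the toric reflection group `W(k,n,m)`: `xᵢ^k = 1` for all `i`, and all
the `m`-factor products `x_i x_{i+1} ⋯ x_{i+m-1}` (indices mod `n`) are equal. -/
def wRels (k n m : ℕ) : Set (FreeGroup (ZMod n)) :=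
  (Set.range fun i : ZMod n => FreeGroup.of i ^ k) ∪
  (Set.range fun i : ZMod n => wWord n m 1 * (wWord n m i)⁻¹)

/-- The toric reflection group `W(k,n,m)`. -/
abbrev TorGroup (k n m : ℕ) := PresentedGroup (wRels k n m)

/-- The generator `xᵢ` of `W(k,n,m)`, for `i : ZMod n`. -/
def tx (k n m : ℕ) (i : ZMod n) : TorGroup k n m := PresentedGroup.of i

/-- The product `x_i x_{i+1} ⋯ x_{i+l-1}` (with `l` factors, indices mod `n`) in
`W(k,n,m)`. -/
def txProd (k n m : ℕ) (l : ℕ) (i : ZMod n) : TorGroup k n m :=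
  ((List.range l).map fun j => tx k n m (i + (j : ZMod n))).prod

lemma txProd_succ (k n m l : ℕ) (i : ZMod n) :
    txProd k n m (l + 1) i = txProd k n m l i * tx k n m (i + l) := by
  unfold txProd
  simp [List.range_succ]

lemma txProd_add (k n m a b : ℕ) (i : ZMod n) :
    txProd k n m (a + b) i = txProd k n m a i * txProd k n m b (i + a) := by
  induction b with
  | zero => simp [txProd]
  | succ b ih =>
    rw [← Nat.add_assoc, txProd_succ, ih, txProd_succ, mul_assoc]
    congr 2
    push_cast
    ring

lemma mk_wWord (k n m l : ℕ) (i : ZMod n) :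
    (QuotientGroup.mk (wWord n l i) : TorGroup k n m) = txProd k n m l i := by
  unfold wWord txProd
  rw [← QuotientGroup.mk'_apply, map_list_prod, List.map_map]
  rfl

lemma txProd_m_eq (k n m : ℕ) (i : ZMod n) : txProd k n m m i = txProd k n m m 1 := by
  have hr : wWord n m 1 * (wWord n m i)⁻¹ ∈ wRels k n m := Or.inr ⟨i, rfl⟩
  have h1 : (QuotientGroup.mk (wWord n m 1 * (wWord n m i)⁻¹) : TorGroup k n m) = 1 :=
    (QuotientGroup.eq_one_iff _).mpr (Subgroup.subset_normalClosure hr)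
  rw [QuotientGroup.mk_mul, QuotientGroup.mk_inv, mk_wWord, mk_wWord,
    ] at h1
  exact (mul_inv_eq_one.mp h1).symm

lemma txProd_mul (k n m s : ℕ) (i : ZMod n) :
    txProd k n m (m * s) i = txProd k n m m 1 ^ s := by
  induction s generalizing i with
  | zero => simp [txProd]
  | succ s ih =>
    rw [Nat.mul_succ, txProd_add, txProd_m_eq, ih, ← pow_succ]

lemma txProd_n_pow (k n m s : ℕ) (i : ZMod n) :
    txProd k n m n i ^ s = txProd k n m (n * s) i := by
  induction s with
  | zero => simp [txProd]
  | succ s ih =>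
    rw [Nat.mul_succ, txProd_add, ← ih, pow_succ]
    congr 2
    simp [ZMod.natCast_self]

lemma txProd_one (k n m : ℕ) (i : ZMod n) : txProd k n m 1 i = tx k n m i := by
  rw [show (1:ℕ) = 0 + 1 from rfl, txProd_succ]
  simp [txProd]

lemma tx_comm (k n m : ℕ) (a : ZMod n) :
    tx k n m a * txProd k n m n 1 ^ m = txProd k n m n 1 ^ m * tx k n m a := by
  have hval : ∀ j : ZMod n, txProd k n m (n * m) j = txProd k n m m 1 ^ n := by
    intro j
    rw [mul_comm n m, txProd_mul]
  rw [txProd_n_pow]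
  have h1 : tx k n m a * txProd k n m (n * m) 1 =
      txProd k n m (1 + n * m) a := by
    rw [txProd_add, txProd_one, hval, hval]
  have h2 : txProd k n m (n * m) 1 * tx k n m a =
      txProd k n m (n * m + 1) a := by
    rw [txProd_add, hval, hval, txProd_one]
    congr 2
    push_cast
    simp [ZMod.natCast_self]
  rw [h1, h2, Nat.add_comm]

/-- In the toric reflection group `W(k,n,m)`, the element `c = (x₁x₂⋯xₙ)^m` is central. -/
theorem stmt8 (k n m : ℕ) (hk : 2 ≤ k) (hn : 2 ≤ n) (hm : 2 ≤ m)
    (hco : Nat.Coprime n m) :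
    txProd k n m n 1 ^ m ∈ Subgroup.center (TorGroup k n m) := by
  rw [Subgroup.mem_center_iff]
  intro g
  induction g using QuotientGroup.induction_on with
  | _ w =>
  induction w using FreeGroup.induction_on with
  | C1 => exact Commute.one_left _
  | of x => exact tx_comm k n m x
  | inv_of x hx => exact Commute.inv_left hx
  | mul x y hx hy =>
    rw [QuotientGroup.mk_mul]
    exact Commute.mul_left hx hy
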